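/- For n ≥ 2, the (2n−1)-torus T^{2n−1} is not Milnor fillable: there is no compact oriented 2n-manifold W with boundary T^{2n−1} such that the restriction maps H^i(W;ℚ) → H^i(T^{2n−1};ℚ) are surjective for i ≤ n−1 and vanish for n ≤ i ≤ 2n−1. -/

import Mathlib

/-- For `n ≥ 2`, the `(2n-1)`-torus `T^{2n-1}` is not Milnor fillable: there is no compact
oriented `2n`-manifold `W` with boundary `T^{2n-1}` such that the restriction maps
`H^i(W;ℚ) → H^i(T^{2n-1};ℚ)` are surjective for `i ≤ n-1` and vanish for `n ≤ i ≤ 2n-1`.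
The rational cohomology ring of `T^{2n-1}` is the exterior algebra `Λ*(V)` on
`V = H¹(T^{2n-1};ℚ) ≅ ℚ^{2n-1}`, with degree-`j` part `⋀[ℚ]^j V`; a hypothetical filling
is encoded by a graded `ℚ`-algebra `HW` and a degree-preserving algebra homomorphism
`b : H^*(W;ℚ) → Λ*(V)` with the stated surjectivity and vanishing.  Conclusion: `False`. -/
theorem statement10
    (n : ℕ) (hn : 2 ≤ n)
    (V : Type) [AddCommGroup V] [Module ℚ V] [FiniteDimensional ℚ V]
    (hV : Module.finrank ℚ V = 2 * n - 1)
    (HW : Type) [Ring HW] [Algebra ℚ HW]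
    (𝒲 : ℕ → Submodule ℚ HW) [GradedAlgebra 𝒲]
    (b : HW →ₐ[ℚ] ExteriorAlgebra ℚ V)
    (hb : ∀ j, ∀ x ∈ 𝒲 j, b x ∈ (⋀[ℚ]^j V : Submodule ℚ (ExteriorAlgebra ℚ V)))
    (hsurj : ∀ j, j ≤ n - 1 →
      ∀ y ∈ (⋀[ℚ]^j V : Submodule ℚ (ExteriorAlgebra ℚ V)), ∃ x ∈ 𝒲 j, b x = y)
    (hvan : ∀ j, n ≤ j → j ≤ 2 * n - 1 → ∀ x ∈ 𝒲 j, b x = 0) :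
    False := by
  classical
  -- a basis of `V`, of cardinality `2n-1 ≥ n`
  have hd : n ≤ 2 * n - 1 := by omega
  let B : Module.Basis (Fin (2 * n - 1)) ℚ V := Module.finBasisOfFinrankEq ℚ V hV
  set v : Fin n → V := fun i => B (Fin.castLE hd i) with hv
  -- each `ι (v i)` is hit by some `x i ∈ 𝒲 1`
  have h1 : (1 : ℕ) ≤ n - 1 := by omega
  have hι : ∀ i : Fin n,
      ExteriorAlgebra.ι ℚ (v i) ∈ (⋀[ℚ]^1 V : Submodule ℚ (ExteriorAlgebra ℚ V)) := by
    intro i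
    show ExteriorAlgebra.ι ℚ (v i) ∈ LinearMap.range (ExteriorAlgebra.ι ℚ) ^ 1
    rw [pow_one]
    exact LinearMap.mem_range_self _ _
  choose x hx hbx using fun i : Fin n => hsurj 1 h1 _ (hι i)
  -- the product of the `x i` lies in `𝒲 n`
  set X : HW := (List.ofFn x).prod with hX
  have hXmem : X ∈ 𝒲 n := by
    have := SetLike.list_prod_ofFn_mem_graded (A := 𝒲) (fun _ : Fin n => 1) x
      (fun j => hx j)
    simpa using this
  -- so `b X = 0`
  have hzero : b X = 0 := hvan n le_rfl hd X hXmem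
  -- but `b X` is `ιMulti ℚ n v`, which is nonzero
  have hbX : b X = ExteriorAlgebra.ιMulti ℚ n v := by
    rw [ExteriorAlgebra.ιMulti_apply, hX, map_list_prod, List.map_ofFn]
    exact congrArg List.prod (congrArg List.ofFn (funext fun i => by simp [hbx]))
  -- detect nonvanishing with an alternating form
  let g : V →ₗ[ℚ] (Fin n → ℚ) :=
    LinearMap.pi fun i => B.coord (Fin.castLE hd i)
  let A : V [⋀^Fin n]→ₗ[ℚ] ℚ := (Matrix.detRowAlternating (R := ℚ) (n := Fin n)).compLinearMap g
  let f : ∀ i, V [⋀^Fin i]→ₗ[ℚ] ℚ := Function.update (fun _ => 0) n A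
  have hAv : A v = 1 := by
    have : (fun i => g (v i)) = (1 : Matrix (Fin n) (Fin n) ℚ) := by
      ext i j
      simp only [g, LinearMap.pi_apply, hv]
      rw [Module.Basis.coord_apply, Module.Basis.repr_self]
      by_cases h : i = j
      · subst h; simp [Matrix.one_apply]
      · have : Fin.castLE hd i ≠ Fin.castLE hd j := by
          simpa [Fin.ext_iff] using fun hh => h (Fin.ext hh)
        simp [Finsupp.single_apply, Fin.ext_iff, Matrix.one_apply, h,
          (Fin.castLE hd j).is_lt]
        omega
    show Matrix.detRowAlternating (fun i => g (v i)) = 1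
    rw [this]
    exact Matrix.det_one
  have hne : ExteriorAlgebra.ιMulti ℚ n v ≠ 0 := by
    intro h0
    have := congrArg (ExteriorAlgebra.liftAlternating f) h0
    rw [ExteriorAlgebra.liftAlternating_apply_ιMulti, map_zero] at this
    have hfn : f n = A := Function.update_self _ _ _
    rw [hfn, hAv] at this
    exact one_ne_zero this
  exact hne (hbX ▸ hzero)
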